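/- Let x₁, …, x_N be as in the periodic setting, solving the Euler–Lagrange system with zero potential gradient, and assume in addition that r ↦ G'(r) r² is nondecreasing on (0, ∞). If U : [0, ∞) → ℝ is twice continuously differentiable and convex, then the map t ↦ Σ_{i=1}^{N} U(Rᵢ(t)) (xᵢ(t) − x_{i−1}(t)) is convex on [0, T]. -/

import Mathlib

open Set Finset

/-- Discrete density `Rᵢ(t) = δ/(xᵢ(t) − x_{i−1}(t))`, `δ = 1/N`, periodic indexing by `ℤ`. -/
noncomputable def Rd (N : ℕ) (x : ℤ → ℝ → ℝ) (i : ℤ) (t : ℝ) : ℝ :=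
  ((1 : ℝ) / N) / (x i t - x (i - 1) t)

section Aux

open Filter Topology

/-- derivative of a monotone (on `Ioi 0`) function is nonneg at positive points -/
lemma aux_deriv_nonneg {f : ℝ → ℝ} {r : ℝ} (hr : 0 < r) (hmono : MonotoneOn f (Ioi 0))
    (hd : DifferentiableAt ℝ f r) : 0 ≤ deriv f r := by
  have h := hd.hasDerivAt
  rw [hasDerivAt_iff_tendsto_slope] at h
  have h' : Tendsto (slope f r) (𝓝[>] r) (𝓝 (deriv f r)) :=
    h.mono_left (nhdsWithin_mono _ (fun s hs => ne_of_gt hs))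
  refine ge_of_tendsto h' ?_
  filter_upwards [self_mem_nhdsWithin] with s hs
  rw [slope_def_field]
  exact div_nonneg (sub_nonneg.2 (hmono hr (hr.trans hs) hs.le)) (by simp at hs; linarith)

/-- Abel summation with periodic boundary: nonnegativity of `Σ pᵢ(qᵢ - q_{i-1})`. -/
lemma aux_abel (N : ℕ) (hN : 1 ≤ N) (p q : ℤ → ℝ)
    (hpq : ∀ i ∈ Finset.Icc (1:ℤ) (N:ℤ), 0 ≤ (p i - p (i+1)) * q i)
    (hpN : p ((N:ℤ)+1) = p 1) (hq0 : q (N:ℤ) = q 0) :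
    0 ≤ ∑ i ∈ Finset.Icc (1:ℤ) (N:ℤ), p i * (q i - q (i-1)) := by
  have h1 : ∑ i ∈ Finset.Icc (1:ℤ) (N:ℤ), p i * q (i-1)
      = ∑ i ∈ Finset.Icc (0:ℤ) ((N:ℤ)-1), p (i+1) * q i := by
    have e : Finset.Icc (1:ℤ) (N:ℤ) = (Finset.Icc (0:ℤ) ((N:ℤ)-1)).map (addRightEmbedding 1) := by
      rw [Finset.map_add_right_Icc]; congr 1 <;> ring
    rw [e, Finset.sum_map]
    apply Finset.sum_congr rfl
    intro j _
    simp [addRightEmbedding]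
  have h2 : ∑ i ∈ Finset.Icc (0:ℤ) ((N:ℤ)-1), p (i+1) * q i
      = ∑ i ∈ Finset.Icc (1:ℤ) (N:ℤ), p (i+1) * q i := by
    have e0 : Finset.Icc (0:ℤ) ((N:ℤ)-1) = insert 0 (Finset.Icc 1 ((N:ℤ)-1)) := by
      ext j; simp; omega
    have e1 : Finset.Icc (1:ℤ) (N:ℤ) = insert (N:ℤ) (Finset.Icc 1 ((N:ℤ)-1)) := by
      ext j; simp; omega
    rw [e0, e1, Finset.sum_insert (by simp), Finset.sum_insert (by simp)]
    rw [hpN, hq0]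
    norm_num
  have h3 : ∑ i ∈ Finset.Icc (1:ℤ) (N:ℤ), p i * (q i - q (i-1))
      = ∑ i ∈ Finset.Icc (1:ℤ) (N:ℤ), (p i - p (i+1)) * q i := by
    rw [show (∑ i ∈ Finset.Icc (1:ℤ) (N:ℤ), p i * (q i - q (i-1)))
        = (∑ i ∈ Finset.Icc (1:ℤ) (N:ℤ), p i * q i)
          - ∑ i ∈ Finset.Icc (1:ℤ) (N:ℤ), p i * q (i-1) by
      rw [← Finset.sum_sub_distrib]; apply Finset.sum_congr rfl; intros; ring]
    rw [h1, h2, ← Finset.sum_sub_distrib]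
    apply Finset.sum_congr rfl; intros; ring
  rw [h3]
  exact Finset.sum_nonneg hpq

end Aux

set_option maxHeartbeats 2000000 in
/-- Displacement convexity for the periodic particle system: along solutions of the
Euler–Lagrange system with zero potential gradient, for any convex `U ∈ C²([0,∞))`
the map `t ↦ Σᵢ U(Rᵢ(t))(xᵢ(t) − x_{i−1}(t))` is convex on `[0,T]`. -/
theorem stmt_0
    (N : ℕ) (hN : 2 ≤ N) (T : ℝ) (hT : 0 < T)
    (x : ℤ → ℝ → ℝ)
    (hper : ∀ i t, x (i + N) t = x i t + 1)
    (hx : ∀ i, ContDiff ℝ 2 (x i))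
    (hord : ∀ i, ∀ t ∈ Icc (0:ℝ) T, x i t < x (i + 1) t)
    (L : ℝ → ℝ) (hL : ContDiff ℝ 2 L)
    (hL'' : ∀ u, 0 < deriv (deriv L) u)
    (G : ℝ → ℝ) (hG : ContDiffOn ℝ 1 G (Ioi 0))
    (hB : MonotoneOn (fun r => deriv G r * r ^ 2) (Ioi 0))
    (hEL : ∀ i, ∀ t ∈ Icc (0:ℝ) T,
      deriv (deriv L) (deriv (x i) t) * deriv (deriv (x i)) t =
        N * (deriv G (Rd N x (i + 1) t) * (Rd N x (i + 1) t) ^ 2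
          - deriv G (Rd N x i t) * (Rd N x i t) ^ 2))
    (U : ℝ → ℝ) (hU : ContDiffOn ℝ 2 U (Ici 0))
    (hUconv : ConvexOn ℝ (Ici 0) U) :
    ConvexOn ℝ (Icc (0:ℝ) T)
      (fun t => ∑ i ∈ Finset.Icc (1:ℤ) (N:ℤ), U (Rd N x i t) * (x i t - x (i - 1) t)) := by
  have hNpos : (0:ℝ) < (N:ℝ) := by
    have : 0 < N := by omega
    exact_mod_cast this
  have hNne : (N:ℝ) ≠ 0 := ne_of_gt hNpos
  simp only [Rd] at hEL ⊢
  -- differentiability of the trajectories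
  have hxd : ∀ i, Differentiable ℝ (x i) := fun i => (hx i).differentiable (by norm_num)
  have hxd2 : ∀ i, Differentiable ℝ (deriv (x i)) := by
    intro i
    have h := hx i
    rw [show (2 : WithTop ℕ∞) = 1 + 1 from by norm_num] at h
    exact (contDiff_succ_iff_deriv.mp h).2.2.differentiable (by norm_num)
  -- periodicity
  have hxfun : ∀ i : ℤ, x (i + N) = fun t => x i t + 1 := fun i => funext (hper i)
  have hvper : ∀ i : ℤ, deriv (x (i + N)) = deriv (x i) := by
    intro i
    rw [hxfun i]
    funext t
    exact deriv_add_const 1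
  have haper : ∀ i : ℤ, deriv (deriv (x (i + N))) = deriv (deriv (x i)) := fun i => by
    rw [hvper i]
  have hdper : ∀ (i : ℤ) (t : ℝ), x (i + N) t - x (i + N - 1) t = x i t - x (i-1) t := by
    intro i t
    have h1 : (i + (N:ℤ) - 1) = (i - 1) + N := by ring
    rw [h1, hper, hper]; ring
  -- positivity of gaps and densities on [0,T]
  have hdpos : ∀ (i : ℤ), ∀ t ∈ Icc (0:ℝ) T, 0 < x i t - x (i-1) t := by
    intro i t ht
    have h := hord (i-1) t ht
    have h2 : i - 1 + 1 = i := by ring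
    rw [h2] at h
    exact sub_pos.2 h
  have hRpos : ∀ (i : ℤ), ∀ t ∈ Icc (0:ℝ) T, 0 < (1:ℝ)/(N:ℝ) / (x i t - x (i-1) t) :=
    fun i t ht => div_pos (by positivity) (hdpos i t ht)
  -- facts about U
  have hUdiff : ∀ r : ℝ, 0 < r → DifferentiableAt ℝ U r := fun r hr =>
    (hU.contDiffAt (Ici_mem_nhds hr)).differentiableAt (by norm_num)
  have hU'cd : ContDiffOn ℝ 1 (deriv U) (Ioi 0) :=
    (hU.mono Ioi_subset_Ici_self).deriv_of_isOpen isOpen_Ioi (by norm_num)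
  have hU'diff : ∀ r : ℝ, 0 < r → DifferentiableAt ℝ (deriv U) r := fun r hr =>
    (hU'cd.contDiffAt (Ioi_mem_nhds hr)).differentiableAt (by norm_num)
  have hconvIoi : ConvexOn ℝ (Ioi 0) U := hUconv.subset Ioi_subset_Ici_self (convex_Ioi 0)
  have hmonoU' : MonotoneOn (deriv U) (Ioi 0) :=
    hconvIoi.monotoneOn_deriv (fun r hr => hUdiff r hr)
  have hU''nonneg : ∀ r : ℝ, 0 < r → 0 ≤ deriv (deriv U) r := fun r hr =>
    aux_deriv_nonneg hr hmonoU' (hU'diff r hr)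
  -- antitonicity of h(r) = U r - r U' r
  have hh : ∀ r s : ℝ, 0 < r → r ≤ s → U s - s * deriv U s ≤ U r - r * deriv U r := by
    intro r s hr hrs
    rcases eq_or_lt_of_le hrs with rfl | hlt
    · exact le_refl _
    have hs : 0 < s := hr.trans hlt
    have hslope : slope U r s ≤ deriv U s :=
      hconvIoi.slope_le_deriv hr hs hlt (hUdiff s hs)
    rw [slope_def_field] at hslope
    have h2 : U s - U r ≤ deriv U s * (s - r) := by
      rw [div_le_iff₀ (by linarith)] at hslope
      linarith
    have hrr : r * deriv U r ≤ r * deriv U s :=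
      mul_le_mul_of_nonneg_left (hmonoU' hr hs hrs) hr.le
    nlinarith [h2, hrr]
  -- first derivative
  have key1 : ∀ t : ℝ, (∀ i : ℤ, 0 < x i t - x (i-1) t) →
      HasDerivAt (fun t => ∑ i ∈ Finset.Icc (1:ℤ) (N:ℤ),
          U ((1:ℝ)/(N:ℝ) / (x i t - x (i-1) t)) * (x i t - x (i-1) t))
        (∑ i ∈ Finset.Icc (1:ℤ) (N:ℤ),
          (U ((1:ℝ)/(N:ℝ) / (x i t - x (i-1) t))
            - (1:ℝ)/(N:ℝ) / (x i t - x (i-1) t) * deriv U ((1:ℝ)/(N:ℝ) / (x i t - x (i-1) t)))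
          * (deriv (x i) t - deriv (x (i-1)) t)) t := by
    intro t hpos
    apply HasDerivAt.fun_sum
    intro i _
    have hne : x i t - x (i-1) t ≠ 0 := ne_of_gt (hpos i)
    have hdi : HasDerivAt (fun s => x i s - x (i-1) s)
        (deriv (x i) t - deriv (x (i-1)) t) t :=
      ((hxd i t).hasDerivAt).sub ((hxd (i-1) t).hasDerivAt)
    have hRi : HasDerivAt (fun s => (1:ℝ)/(N:ℝ) / (x i s - x (i-1) s))
        ((0 * (x i t - x (i-1) t) - (1:ℝ)/(N:ℝ) * (deriv (x i) t - deriv (x (i-1)) t))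
          / (x i t - x (i-1) t)^2) t :=
      (hasDerivAt_const t ((1:ℝ)/(N:ℝ))).div hdi hne
    have hUd : HasDerivAt U (deriv U ((1:ℝ)/(N:ℝ) / (x i t - x (i-1) t)))
        ((1:ℝ)/(N:ℝ) / (x i t - x (i-1) t)) :=
      (hUdiff _ (div_pos (by positivity) (hpos i))).hasDerivAt
    have hcomp : HasDerivAt (fun s => U ((1:ℝ)/(N:ℝ) / (x i s - x (i-1) s)))
        (deriv U ((1:ℝ)/(N:ℝ) / (x i t - x (i-1) t)) *
          ((0 * (x i t - x (i-1) t) - (1:ℝ)/(N:ℝ) * (deriv (x i) t - deriv (x (i-1)) t))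
            / (x i t - x (i-1) t)^2)) t := hUd.comp t hRi
    have hmul := hcomp.fun_mul hdi
    convert hmul using 1
    · rfl
    field_simp
    ring
  -- second derivative
  have key2 : ∀ t : ℝ, (∀ i : ℤ, 0 < x i t - x (i-1) t) →
      HasDerivAt (fun t => ∑ i ∈ Finset.Icc (1:ℤ) (N:ℤ),
          (U ((1:ℝ)/(N:ℝ) / (x i t - x (i-1) t))
            - (1:ℝ)/(N:ℝ) / (x i t - x (i-1) t) * deriv U ((1:ℝ)/(N:ℝ) / (x i t - x (i-1) t)))
          * (deriv (x i) t - deriv (x (i-1)) t))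
        (∑ i ∈ Finset.Icc (1:ℤ) (N:ℤ),
          (((1:ℝ)/(N:ℝ) / (x i t - x (i-1) t))
              * deriv (deriv U) ((1:ℝ)/(N:ℝ) / (x i t - x (i-1) t))
              * ((1:ℝ)/(N:ℝ) * (deriv (x i) t - deriv (x (i-1)) t)^2 / (x i t - x (i-1) t)^2)
            + (U ((1:ℝ)/(N:ℝ) / (x i t - x (i-1) t))
                - (1:ℝ)/(N:ℝ) / (x i t - x (i-1) t)
                  * deriv U ((1:ℝ)/(N:ℝ) / (x i t - x (i-1) t)))
              * (deriv (deriv (x i)) t - deriv (deriv (x (i-1))) t))) t := by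
    intro t hpos
    apply HasDerivAt.fun_sum
    intro i _
    have hne : x i t - x (i-1) t ≠ 0 := ne_of_gt (hpos i)
    have hRposi : 0 < (1:ℝ)/(N:ℝ) / (x i t - x (i-1) t) := div_pos (by positivity) (hpos i)
    have hdi : HasDerivAt (fun s => x i s - x (i-1) s)
        (deriv (x i) t - deriv (x (i-1)) t) t :=
      ((hxd i t).hasDerivAt).sub ((hxd (i-1) t).hasDerivAt)
    have hRi : HasDerivAt (fun s => (1:ℝ)/(N:ℝ) / (x i s - x (i-1) s))
        ((0 * (x i t - x (i-1) t) - (1:ℝ)/(N:ℝ) * (deriv (x i) t - deriv (x (i-1)) t))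
          / (x i t - x (i-1) t)^2) t :=
      (hasDerivAt_const t ((1:ℝ)/(N:ℝ))).div hdi hne
    have hUd : HasDerivAt U (deriv U ((1:ℝ)/(N:ℝ) / (x i t - x (i-1) t)))
        ((1:ℝ)/(N:ℝ) / (x i t - x (i-1) t)) := (hUdiff _ hRposi).hasDerivAt
    have hU'd : HasDerivAt (deriv U)
        (deriv (deriv U) ((1:ℝ)/(N:ℝ) / (x i t - x (i-1) t)))
        ((1:ℝ)/(N:ℝ) / (x i t - x (i-1) t)) := (hU'diff _ hRposi).hasDerivAt
    have hcomp1 : HasDerivAt (fun s => U ((1:ℝ)/(N:ℝ) / (x i s - x (i-1) s)))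
        (deriv U ((1:ℝ)/(N:ℝ) / (x i t - x (i-1) t)) *
          ((0 * (x i t - x (i-1) t) - (1:ℝ)/(N:ℝ) * (deriv (x i) t - deriv (x (i-1)) t))
            / (x i t - x (i-1) t)^2)) t := hUd.comp t hRi
    have hcomp2 : HasDerivAt (fun s => deriv U ((1:ℝ)/(N:ℝ) / (x i s - x (i-1) s)))
        (deriv (deriv U) ((1:ℝ)/(N:ℝ) / (x i t - x (i-1) t)) *
          ((0 * (x i t - x (i-1) t) - (1:ℝ)/(N:ℝ) * (deriv (x i) t - deriv (x (i-1)) t))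
            / (x i t - x (i-1) t)^2)) t := HasDerivAt.comp (h₂ := deriv U) t hU'd hRi
    have hmul2 := hRi.fun_mul hcomp2
    have hsub := hcomp1.fun_sub hmul2
    have hw : HasDerivAt (fun s => deriv (x i) s - deriv (x (i-1)) s)
        (deriv (deriv (x i)) t - deriv (deriv (x (i-1))) t) t :=
      ((hxd2 i t).hasDerivAt).sub ((hxd2 (i-1) t).hasDerivAt)
    have hfin := hsub.fun_mul hw
    convert hfin using 1
    · rfl
    field_simp
    ring
  -- nonnegativity of the second derivative
  have key3 : ∀ t ∈ Icc (0:ℝ) T,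
      0 ≤ ∑ i ∈ Finset.Icc (1:ℤ) (N:ℤ),
          (((1:ℝ)/(N:ℝ) / (x i t - x (i-1) t))
              * deriv (deriv U) ((1:ℝ)/(N:ℝ) / (x i t - x (i-1) t))
              * ((1:ℝ)/(N:ℝ) * (deriv (x i) t - deriv (x (i-1)) t)^2 / (x i t - x (i-1) t)^2)
            + (U ((1:ℝ)/(N:ℝ) / (x i t - x (i-1) t))
                - (1:ℝ)/(N:ℝ) / (x i t - x (i-1) t)
                  * deriv U ((1:ℝ)/(N:ℝ) / (x i t - x (i-1) t)))
              * (deriv (deriv (x i)) t - deriv (deriv (x (i-1))) t)) := by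
    intro t ht
    rw [Finset.sum_add_distrib]
    have hA : 0 ≤ ∑ i ∈ Finset.Icc (1:ℤ) (N:ℤ),
        ((1:ℝ)/(N:ℝ) / (x i t - x (i-1) t))
          * deriv (deriv U) ((1:ℝ)/(N:ℝ) / (x i t - x (i-1) t))
          * ((1:ℝ)/(N:ℝ) * (deriv (x i) t - deriv (x (i-1)) t)^2 / (x i t - x (i-1) t)^2) := by
      apply Finset.sum_nonneg
      intro i _
      have h0 := hRpos i t ht
      exact mul_nonneg (mul_nonneg h0.le (hU''nonneg _ h0)) (by positivity)
    have hPQ : 0 ≤ ∑ i ∈ Finset.Icc (1:ℤ) (N:ℤ),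
        (U ((1:ℝ)/(N:ℝ) / (x i t - x (i-1) t))
            - (1:ℝ)/(N:ℝ) / (x i t - x (i-1) t)
              * deriv U ((1:ℝ)/(N:ℝ) / (x i t - x (i-1) t)))
          * (deriv (deriv (x i)) t - deriv (deriv (x (i-1))) t) := by
      apply aux_abel N (by omega)
        (fun i => U ((1:ℝ)/(N:ℝ) / (x i t - x (i-1) t))
            - (1:ℝ)/(N:ℝ) / (x i t - x (i-1) t)
              * deriv U ((1:ℝ)/(N:ℝ) / (x i t - x (i-1) t)))
        (fun i => deriv (deriv (x i)) t)
      · -- termwise sign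
        intro i _
        have h0 := hRpos i t ht
        have h1 := hRpos (i+1) t ht
        have e := hEL i t ht
        have hLp := hL'' (deriv (x i) t)
        rcases le_total ((1:ℝ)/(N:ℝ) / (x i t - x (i-1) t))
            ((1:ℝ)/(N:ℝ) / (x (i+1) t - x (i+1-1) t)) with hc | hc
        · have hBle := hB (mem_Ioi.2 h0) (mem_Ioi.2 h1) hc
          dsimp only at hBle
          have hq : 0 ≤ deriv (deriv (x i)) t := by nlinarith [e, hLp, hBle, hNpos]
          have hple := hh _ _ h0 hc
          exact mul_nonneg (by linarith) hq
        · have hBle := hB (mem_Ioi.2 h1) (mem_Ioi.2 h0) hc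
          dsimp only at hBle
          have hq : deriv (deriv (x i)) t ≤ 0 := by nlinarith [e, hLp, hBle, hNpos]
          have hple := hh _ _ h1 hc
          nlinarith [hple, hq]
      · -- p periodicity
        rw [show (N:ℤ)+1 = 1+(N:ℤ) by ring, hdper 1 t]
      · -- q periodicity
        rw [show (N:ℤ) = 0+(N:ℤ) by ring, haper 0]
    exact add_nonneg hA hPQ
  -- assemble
  refine convexOn_of_deriv2_nonneg (convex_Icc 0 T) ?_ ?_ ?_ ?_
  · intro t ht
    exact ((key1 t (fun i => hdpos i t ht)).continuousAt).continuousWithinAt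
  · rw [interior_Icc]
    intro t ht
    exact ((key1 t (fun i => hdpos i t (Ioo_subset_Icc_self ht))).differentiableAt).differentiableWithinAt
  · rw [interior_Icc]
    intro t ht
    have hev : deriv (fun t => ∑ i ∈ Finset.Icc (1:ℤ) (N:ℤ),
          U ((1:ℝ)/(N:ℝ) / (x i t - x (i-1) t)) * (x i t - x (i-1) t))
        =ᶠ[nhds t] (fun t => ∑ i ∈ Finset.Icc (1:ℤ) (N:ℤ),
          (U ((1:ℝ)/(N:ℝ) / (x i t - x (i-1) t))
            - (1:ℝ)/(N:ℝ) / (x i t - x (i-1) t) * deriv U ((1:ℝ)/(N:ℝ) / (x i t - x (i-1) t)))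
          * (deriv (x i) t - deriv (x (i-1)) t)) :=
      Filter.eventuallyEq_of_mem (isOpen_Ioo.mem_nhds ht)
        (fun s hs => (key1 s (fun i => hdpos i s (Ioo_subset_Icc_self hs))).deriv)
    have hd2 := (key2 t (fun i => hdpos i t (Ioo_subset_Icc_self ht))).differentiableAt
    exact (hd2.congr_of_eventuallyEq hev).differentiableWithinAt
  · rw [interior_Icc]
    intro t ht
    have hev : deriv (fun t => ∑ i ∈ Finset.Icc (1:ℤ) (N:ℤ),
          U ((1:ℝ)/(N:ℝ) / (x i t - x (i-1) t)) * (x i t - x (i-1) t))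
        =ᶠ[nhds t] (fun t => ∑ i ∈ Finset.Icc (1:ℤ) (N:ℤ),
          (U ((1:ℝ)/(N:ℝ) / (x i t - x (i-1) t))
            - (1:ℝ)/(N:ℝ) / (x i t - x (i-1) t) * deriv U ((1:ℝ)/(N:ℝ) / (x i t - x (i-1) t)))
          * (deriv (x i) t - deriv (x (i-1)) t)) :=
      Filter.eventuallyEq_of_mem (isOpen_Ioo.mem_nhds ht)
        (fun s hs => (key1 s (fun i => hdpos i s (Ioo_subset_Icc_self hs))).deriv)
    show 0 ≤ deriv (deriv (fun t => ∑ i ∈ Finset.Icc (1:ℤ) (N:ℤ),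
          U ((1:ℝ)/(N:ℝ) / (x i t - x (i-1) t)) * (x i t - x (i-1) t))) t
    rw [hev.deriv_eq, (key2 t (fun i => hdpos i t (Ioo_subset_Icc_self ht))).deriv]
    exact key3 t (Ioo_subset_Icc_self ht)
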